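/- Let ε > 0 be the inverse of a positive integer and let x = (x_1,…,x_n) be a probability vector (all x_j ≥ 0 and Σ_j x_j = 1). Then there exists a probability vector x̃ = (x̃_1,…,x̃_n) (all x̃_j ≥ 0 and Σ_j x̃_j = 1) such that (1) every entry x̃_j is a non-negative integer multiple of ε, and (2) for every j ∈ {1,…,n}, |Σ_{k=1}^{j} (x̃_k − x_k)| < ε. -/

import Mathlib

lemma sum_Iic_fin {n : ℕ} (g : Fin n → ℝ) (j : Fin n) :
    ∑ k ∈ Finset.Iic j, g k
      = ∑ k ∈ Finset.range (j.1+1), (if h : k < n then g ⟨k,h⟩ else 0) := by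
  refine Finset.sum_bij' (fun (k : Fin n) _ => k.1) (fun k hk => (⟨k, ?_⟩ : Fin n)) ?_ ?_ ?_ ?_ ?_
  · have := Finset.mem_range.mp hk; omega
  all_goals intro a ha
  · exact Finset.mem_range.mpr (Nat.lt_succ_of_le (Fin.le_def.mp (Finset.mem_Iic.mp ha)))
  · exact Finset.mem_Iic.mpr (Fin.mk_le_of_le_val (by have := Finset.mem_range.mp ha; omega))
  · rfl
  · rfl
  · simp

/-- every probability vector admits an ε-rounding, for ε > 0 the
inverse of a positive integer: a probability vector whose entries are
non-negative integer multiples of ε and whose prefix sums differ from the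
original by less than ε. -/
theorem epsilon_rounding_exists (n : ℕ) (ε : ℝ)
    (hε : ∃ M : ℕ, 0 < M ∧ ε = 1 / (M : ℝ))
    (x : Fin n → ℝ) (hx0 : ∀ j, 0 ≤ x j) (hx1 : ∑ j, x j = 1) :
    ∃ y : Fin n → ℝ,
      (∀ j, 0 ≤ y j) ∧ (∑ j, y j = 1) ∧
      (∀ j, ∃ a : ℕ, y j = (a : ℝ) * ε) ∧
      (∀ j : Fin n, |∑ k ∈ Finset.Iic j, (y k - x k)| < ε) := by
  obtain ⟨M, hM, hεM⟩ := hε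
  have hM0 : (0:ℝ) < (M:ℝ) := by exact_mod_cast hM
  set x' : ℕ → ℝ := fun k => if h : k < n then x ⟨k, h⟩ else 0 with hx'
  have hx'0 : ∀ k, 0 ≤ x' k := by
    intro k; by_cases h : k < n <;> simp [hx', h, hx0]
  set S : ℕ → ℝ := fun m => ∑ k ∈ Finset.range m, x' k with hS
  have hSmono : Monotone S := by
    intro a b hab
    exact Finset.sum_le_sum_of_subset_of_nonneg
      (Finset.range_subset_range.mpr hab) (fun k _ _ => hx'0 k)
  set F : ℕ → ℤ := fun m => ⌊(M:ℝ) * S m⌋ with hF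
  have hFmono : Monotone F := fun a b hab =>
    Int.floor_le_floor (by nlinarith [hSmono hab])
  have hS0 : S 0 = 0 := by simp [hS]
  have hSn : S n = 1 := by
    show ∑ k ∈ Finset.range n, x' k = 1
    rw [← hx1, ← Fin.sum_univ_eq_sum_range]
    exact Finset.sum_congr rfl (fun i _ => by simp [hx'])
  have hF0 : F 0 = 0 := by simp [hF, hS0]
  have hFn : F n = (M : ℤ) := by
    simp [hF, hSn]
  set y : Fin n → ℝ := fun j => ((F (j.1+1) - F j.1 : ℤ) : ℝ) / M with hy
  have hy0 : ∀ j, 0 ≤ y j := by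
    intro j
    apply div_nonneg _ hM0.le
    have : F j.1 ≤ F (j.1+1) := hFmono (Nat.le_succ _)
    exact_mod_cast sub_nonneg.mpr this
  refine ⟨y, hy0, ?_, ?_, ?_⟩
  · -- sum = 1
    have : ∑ j : Fin n, y j = ∑ k ∈ Finset.range n,
        (((F (k+1) : ℝ)) / M - ((F k : ℝ)) / M) := by
      rw [← Fin.sum_univ_eq_sum_range]
      refine Finset.sum_congr rfl (fun i _ => ?_)
      push_cast [hy]
      ring
    rw [this, Finset.sum_range_sub (fun k => ((F k : ℝ)) / M), hF0, hFn]
    field_simp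
    simp
  · -- multiples
    intro j
    refine ⟨(F (j.1+1) - F j.1).toNat, ?_⟩
    have hnn : 0 ≤ F (j.1+1) - F j.1 := sub_nonneg.mpr (hFmono (Nat.le_succ _))
    have hcast : ((F (j.1+1) - F j.1 : ℤ) : ℝ) = (((F (j.1+1) - F j.1).toNat : ℕ) : ℝ) := by
      exact_mod_cast (Int.toNat_of_nonneg hnn).symm
    show ((F (j.1+1) - F j.1 : ℤ) : ℝ) / M = _
    rw [hcast, hεM]
    ring
  · -- prefix sums
    intro j
    have hsplit : ∑ k ∈ Finset.Iic j, (y k - x k)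
        = (∑ k ∈ Finset.Iic j, y k) - ∑ k ∈ Finset.Iic j, x k :=
      Finset.sum_sub_distrib _ _
    have hyIic : ∑ k ∈ Finset.Iic j, y k = ((F (j.1+1) : ℝ)) / M := by
      rw [sum_Iic_fin y j]
      have : ∑ k ∈ Finset.range (j.1+1), (if h : k < n then y ⟨k,h⟩ else 0)
          = ∑ k ∈ Finset.range (j.1+1), (((F (k+1) : ℝ)) / M - ((F k : ℝ)) / M) := by
        refine Finset.sum_congr rfl (fun k hk => ?_)
        have hkn : k < n := lt_of_lt_of_le (Finset.mem_range.mp hk) j.2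
        rw [dif_pos hkn]
        push_cast [hy]
        ring
      rw [this, Finset.sum_range_sub (fun k => ((F k : ℝ)) / M), hF0]
      simp
    have hxIic : ∑ k ∈ Finset.Iic j, x k = S (j.1+1) := by
      show _ = ∑ k ∈ Finset.range (j.1+1), x' k
      rw [sum_Iic_fin x j]
    rw [hsplit, hyIic, hxIic, hεM]
    have h1 : (F (j.1+1) : ℝ) ≤ (M:ℝ) * S (j.1+1) := Int.floor_le _
    have h2 : (M:ℝ) * S (j.1+1) < (F (j.1+1) : ℝ) + 1 := Int.lt_floor_add_one _
    rw [abs_lt]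
    constructor
    · rw [neg_lt, neg_sub, sub_lt_iff_lt_add, ← add_div, lt_div_iff₀ hM0]
      linarith
    · have hle : (F (j.1+1) : ℝ)/M ≤ S (j.1+1) := by
        rw [div_le_iff₀ hM0]; linarith
      have hε0 : (0:ℝ) < 1/(M:ℝ) := by positivity
      linarith
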